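/- Let R be a commutative G-graded ring and I, J graded radically principal ideals of R. Then the product IJ is a graded radically principal ideal of R. -/

import Mathlib

open DirectSum

variable {G A : Type*} [AddGroup G] [DecidableEq G] [CommRing A]

def gradedRadical (𝒜 : G → AddSubgroup A) [GradedRing 𝒜] (I : Ideal A) : Set A :=
  {x | ∀ g : G, ∃ n : ℕ, ((DirectSum.decompose 𝒜 x g : A)) ^ n ∈ I}

def IsGradedRadicallyPrincipal (𝒜 : G → AddSubgroup A) [GradedRing 𝒜] (I : Ideal A) : Prop :=
  ∃ c : A, SetLike.IsHomogeneousElem 𝒜 c ∧ gradedRadical 𝒜 I = gradedRadical 𝒜 (Ideal.span {c})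

def GradedRadicallyPrincipalRing (𝒜 : G → AddSubgroup A) [GradedRing 𝒜] : Prop :=
  ∀ I : Ideal A, I.IsHomogeneous 𝒜 → IsGradedRadicallyPrincipal 𝒜 I

def IsGradedPrime (𝒜 : G → AddSubgroup A) [GradedRing 𝒜] (P : Ideal A) : Prop :=
  P ≠ ⊤ ∧ P.IsHomogeneous 𝒜 ∧
    ∀ ⦃x y : A⦄, SetLike.IsHomogeneousElem 𝒜 x → SetLike.IsHomogeneousElem 𝒜 y → x * y ∈ P →
      x ∈ P ∨ y ∈ P

lemma gradedRadical_mul (𝒜 : G → AddSubgroup A) [GradedRing 𝒜] (I J : Ideal A) :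
    gradedRadical 𝒜 (I * J) = gradedRadical 𝒜 I ∩ gradedRadical 𝒜 J := by
  ext x
  constructor
  · intro hx
    refine ⟨fun g => ?_, fun g => ?_⟩
    · obtain ⟨n, hn⟩ := hx g
      exact ⟨n, (Ideal.mul_le_inf hn).1⟩
    · obtain ⟨n, hn⟩ := hx g
      exact ⟨n, (Ideal.mul_le_inf hn).2⟩
  · rintro ⟨h1, h2⟩ g
    obtain ⟨n, hn⟩ := h1 g
    obtain ⟨m, hm⟩ := h2 g
    exact ⟨n + m, by rw [pow_add]; exact Ideal.mul_mem_mul hn hm⟩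

theorem stmt_2 (𝒜 : G → AddSubgroup A) [GradedRing 𝒜] (I J : Ideal A)
    (hI : I.IsHomogeneous 𝒜) (hJ : J.IsHomogeneous 𝒜)
    (hI' : IsGradedRadicallyPrincipal 𝒜 I) (hJ' : IsGradedRadicallyPrincipal 𝒜 J) :
    (I * J).IsHomogeneous 𝒜 ∧ IsGradedRadicallyPrincipal 𝒜 (I * J) := by
  refine ⟨hI.mul hJ, ?_⟩
  obtain ⟨c, hc, hcI⟩ := hI'
  obtain ⟨d, hd, hdJ⟩ := hJ'
  refine ⟨c * d, SetLike.IsHomogeneousElem.mul hc hd, ?_⟩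
  rw [gradedRadical_mul, hcI, hdJ, ← Ideal.span_singleton_mul_span_singleton,
    gradedRadical_mul]
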